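/- Let Γ be a countable group acting continuously on a compact metric space X, and suppose the action is equicontinuous (the family of maps {x ↦ γ • x : γ ∈ Γ} is equicontinuous) and minimal (every orbit is dense in X). Let p : Γ → [0,1] satisfy ∑_{γ ∈ Γ} p(γ) = 1 and suppose that supp(p) = {γ : p(γ) > 0} generates Γ as a semigroup. Then every p-harmonic Borel probability measure μ on X is Γ-invariant: for every γ ∈ Γ and every continuous function f : X → ℝ, ∫_X f(γ • x) dμ(x) = ∫_X f(x) dμ(x). -/

import Mathlib

open MeasureTheory

/-- The family of maps `x ↦ β • x`, viewed as continuous self-maps of `X`, is totally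
bounded in the sup metric, thanks to equicontinuity. -/
lemma harmonic_tb_aux {X : Type*} [MetricSpace X] [CompactSpace X]
    {Γ : Type*} [Group Γ] [MulAction Γ X]
    (hcont : ∀ γ : Γ, Continuous fun x : X => γ • x)
    (hequi : ∀ ε > (0 : ℝ), ∃ δ > (0 : ℝ), ∀ γ : Γ, ∀ x x' : X,
      dist x x' < δ → dist (γ • x) (γ • x') ≤ ε) :
    TotallyBounded (Set.range fun β : Γ => (⟨fun x => β • x, hcont β⟩ : C(X, X))) := by
  set T : Γ → C(X, X) := fun β => (⟨fun x => β • x, hcont β⟩ : C(X, X)) with hTdef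
  rw [Metric.totallyBounded_iff]
  intro ε hε
  obtain ⟨δ, hδ, hδ'⟩ := hequi (ε / 4) (by positivity)
  obtain ⟨s, hs⟩ := isCompact_univ.elim_finite_subcover (fun x : X => Metric.ball x δ)
    (fun x => Metric.isOpen_ball)
    (fun x _ => Set.mem_iUnion.2 ⟨x, Metric.mem_ball_self hδ⟩)
  classical
  -- the evaluation map at the finitely many centers
  let Ψ : Γ → (s → X) := fun β i => β • (i : X)
  have htb : TotallyBounded (Set.range Ψ) :=
    (isCompact_univ.totallyBounded).subset (Set.subset_univ _)
  obtain ⟨t, hts, htf, htc⟩ := totallyBounded_iff_subset.1 htb _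
    (Metric.dist_mem_uniformity (show (0 : ℝ) < ε / 4 by positivity))
  have : ∀ y : t, ∃ β : Γ, Ψ β = (y : s → X) := fun y => hts y.2
  choose g hg using this
  have htfin : Finite t := htf
  refine ⟨Set.range fun y : t => T (g y), Set.finite_range _, ?_⟩
  rintro _ ⟨β, rfl⟩
  have hβ : Ψ β ∈ ⋃ y ∈ t, { x | dist x y < ε / 4 } := htc (Set.mem_range_self β)
  obtain ⟨y, hyt, hy⟩ := Set.mem_iUnion₂.1 hβ
  refine Set.mem_iUnion₂.2 ⟨T (g ⟨y, hyt⟩), Set.mem_range_self _, ?_⟩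
  rw [Metric.mem_ball]
  have key : ∀ x : X, dist (β • x) (g ⟨y, hyt⟩ • x) ≤ 3 * (ε / 4) := by
    intro x
    obtain ⟨i, hi⟩ := Set.mem_iUnion₂.1 (hs (Set.mem_univ x))
    obtain ⟨his, hxi⟩ := hi
    have hxi' : dist x i < δ := by simpa [Metric.mem_ball] using hxi
    have h1 : dist (β • x) (β • i) ≤ ε / 4 := hδ' β x i hxi'
    have h3 : dist (g ⟨y, hyt⟩ • i) (g ⟨y, hyt⟩ • x) ≤ ε / 4 := by
      have := hδ' (g ⟨y, hyt⟩) i x (by simpa [dist_comm] using hxi')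
      exact this
    have h2 : dist (β • i) (g ⟨y, hyt⟩ • i) < ε / 4 := by
      have hle : dist (Ψ β ⟨i, his⟩) (Ψ (g ⟨y, hyt⟩) ⟨i, his⟩)
          ≤ dist (Ψ β) (Ψ (g ⟨y, hyt⟩)) := dist_le_pi_dist _ _ _
      have : dist (Ψ β) (Ψ (g ⟨y, hyt⟩)) < ε / 4 := by
        rw [hg ⟨y, hyt⟩]; exact hy
      exact lt_of_le_of_lt hle this
    calc dist (β • x) (g ⟨y, hyt⟩ • x)
        ≤ dist (β • x) (β • i) + dist (β • i) (g ⟨y, hyt⟩ • i)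
          + dist (g ⟨y, hyt⟩ • i) (g ⟨y, hyt⟩ • x) := dist_triangle4 _ _ _ _
      _ ≤ ε / 4 + ε / 4 + ε / 4 := by linarith [h1, h2.le, h3]
      _ = 3 * (ε / 4) := by ring
  have : dist (T β) (T (g ⟨y, hyt⟩)) ≤ 3 * (ε / 4) :=
    (ContinuousMap.dist_le (by positivity)).2 key
  linarith

theorem harmonic_measure_is_invariant
    {X : Type*} [MetricSpace X] [CompactSpace X] [MeasurableSpace X] [BorelSpace X]
    (Γ : Type*) [Group Γ] [Countable Γ] [MulAction Γ X]
    (hcont : ∀ γ : Γ, Continuous fun x : X => γ • x)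
    (hequi : ∀ ε > (0 : ℝ), ∃ δ > (0 : ℝ), ∀ γ : Γ, ∀ x x' : X,
      dist x x' < δ → dist (γ • x) (γ • x') ≤ ε)
    (hmin : ∀ x : X, Dense (MulAction.orbit Γ x))
    (p : Γ → ℝ) (hp0 : ∀ γ, 0 ≤ p γ) (hp1 : ∀ γ, p γ ≤ 1) (hpsum : HasSum p 1)
    (hgen : Subsemigroup.closure {γ : Γ | 0 < p γ} = ⊤)
    (μ : Measure X) [IsProbabilityMeasure μ]
    (hμ : ∀ f : C(X, ℝ), ∫ x, f x ∂μ = ∫ x, (∑' γ : Γ, p γ * f (γ • x)) ∂μ) :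
    ∀ γ : Γ, ∀ f : C(X, ℝ), ∫ x, f (γ • x) ∂μ = ∫ x, f x ∂μ := by
  intro γ₀ f
  classical
  set T : Γ → C(X, X) := fun β => (⟨fun x => β • x, hcont β⟩ : C(X, X)) with hTdef
  set φ : Γ → ℝ := fun β => ∫ x, f (β • x) ∂μ with hφdef
  set C : ℝ := ‖f‖ with hCdef
  have hC0 : 0 ≤ C := norm_nonneg f
  have hfb : ∀ y : X, ‖f y‖ ≤ C := fun y => f.norm_coe_le_norm y
  have hφbound : ∀ β, |φ β| ≤ C := by
    intro β
    have : ‖∫ x, f (β • x) ∂μ‖ ≤ C * (μ Set.univ).toReal :=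
      norm_integral_le_of_norm_le_const (Filter.Eventually.of_forall fun x => hfb _)
    simpa [hφdef, abs_of_nonneg, Real.norm_eq_abs] using this
  have hBdd : BddAbove (Set.range φ) :=
    ⟨C, by rintro _ ⟨β, rfl⟩; exact (abs_le.mp (hφbound β)).2⟩
  set M : ℝ := sSup (Set.range φ) with hMdef
  have hφleM : ∀ β, φ β ≤ M := fun β => le_csSup hBdd (Set.mem_range_self β)
  -- summability
  have hpsummable : Summable p := hpsum.summable
  have hsumm : ∀ β : Γ, Summable fun γ => p γ * φ (β * γ) := by
    intro β
    refine Summable.of_norm_bounded (hpsummable.mul_right C) ?_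
    intro γ
    rw [norm_mul, Real.norm_eq_abs, Real.norm_eq_abs, abs_of_nonneg (hp0 γ)]
    exact mul_le_mul_of_nonneg_left (hφbound _) (hp0 γ)
  -- harmonicity of φ
  have hharm : ∀ β : Γ, φ β = ∑' γ : Γ, p γ * φ (β * γ) := by
    intro β
    have h1 := hμ (f.comp (T β))
    have h2 : (∫ x, (f.comp (T β)) x ∂μ) = φ β := rfl
    have h3 : ∀ x : X, (∑' γ : Γ, p γ * (f.comp (T β)) (γ • x))
        = ∑' γ : Γ, p γ * f ((β * γ) • x) := by
      intro x
      refine tsum_congr fun γ => ?_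
      simp [T, ContinuousMap.comp_apply, mul_smul]
    rw [h2, funext h3] at h1
    -- now swap integral and tsum
    have hmeas : ∀ γ : Γ, AEStronglyMeasurable (fun x => p γ * f ((β * γ) • x)) μ :=
      fun γ => (continuous_const.mul (f.continuous.comp (hcont (β * γ)))).aestronglyMeasurable
    have hlint : ∀ γ : Γ, (∫⁻ x, ‖p γ * f ((β * γ) • x)‖₊ ∂μ) ≤ ENNReal.ofReal (p γ * C) := by
      intro γ
      have hb : ∀ x : X, (‖p γ * f ((β * γ) • x)‖₊ : ENNReal) ≤ ENNReal.ofReal (p γ * C) := by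
        intro x
        rw [← enorm_eq_nnnorm, ← ofReal_norm]
        refine ENNReal.ofReal_le_ofReal ?_
        rw [norm_mul, Real.norm_eq_abs (p γ), abs_of_nonneg (hp0 γ)]
        exact mul_le_mul_of_nonneg_left (hfb _) (hp0 γ)
      calc (∫⁻ x, ‖p γ * f ((β * γ) • x)‖₊ ∂μ)
          ≤ ∫⁻ _, ENNReal.ofReal (p γ * C) ∂μ := lintegral_mono hb
        _ = ENNReal.ofReal (p γ * C) := by simp
    have hfin : (∑' γ : Γ, ∫⁻ x, ‖p γ * f ((β * γ) • x)‖₊ ∂μ) ≠ ⊤ := by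
      have hle : (∑' γ : Γ, ∫⁻ x, ‖p γ * f ((β * γ) • x)‖₊ ∂μ)
          ≤ ∑' γ : Γ, ENNReal.ofReal (p γ * C) := ENNReal.tsum_le_tsum hlint
      have heq : (∑' γ : Γ, ENNReal.ofReal (p γ * C)) = ENNReal.ofReal C := by
        rw [← ENNReal.ofReal_tsum_of_nonneg (fun γ => mul_nonneg (hp0 γ) hC0)
          (hpsummable.mul_right C)]
        rw [(hpsum.mul_right C).tsum_eq, one_mul]
      exact ne_top_of_le_ne_top (by simp [heq]) hle
    rw [integral_tsum hmeas hfin] at h1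
    have h4 : ∀ γ : Γ, (∫ x, p γ * f ((β * γ) • x) ∂μ) = p γ * φ (β * γ) := by
      intro γ
      rw [integral_const_mul]
    rw [funext h4] at h1
    exact h1
  -- key one-step inequality
  have hkey : ∀ β γ : Γ, p γ * (M - φ (β * γ)) ≤ M - φ β := by
    intro β γ
    have hsum1 : HasSum (fun γ => p γ * M) M := by
      simpa using hpsum.mul_right M
    have hsum2 : HasSum (fun γ => p γ * φ (β * γ)) (φ β) := by
      rw [hharm β]; exact (hsumm β).hasSum
    have h3 : HasSum (fun γ => p γ * M - p γ * φ (β * γ)) (M - φ β) := hsum1.sub hsum2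
    have h4 : p γ * M - p γ * φ (β * γ) ≤ M - φ β := by
      refine le_hasSum h3 γ fun j _ => ?_
      have : φ (β * j) ≤ M := hφleM _
      nlinarith [hp0 j]
    nlinarith [h4]
  -- words in the support
  have hstep : ∀ w : Γ, ∃ q : ℝ, 0 < q ∧ ∀ β, q * (M - φ (β * w)) ≤ M - φ β := by
    intro w
    have hw : w ∈ Subsemigroup.closure {γ : Γ | 0 < p γ} := by
      rw [hgen]; exact Subsemigroup.mem_top w
    induction hw using Subsemigroup.closure_induction with
    | mem γ hγ => exact ⟨p γ, hγ, fun β => hkey β γ⟩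
    | mul x y hx hy ihx ihy =>
      obtain ⟨q1, hq1, h1⟩ := ihx
      obtain ⟨q2, hq2, h2⟩ := ihy
      refine ⟨q1 * q2, mul_pos hq1 hq2, fun β => ?_⟩
      have hA := h2 (β * x)
      have hB := h1 β
      have hxy : β * (x * y) = (β * x) * y := (mul_assoc β x y).symm
      calc q1 * q2 * (M - φ (β * (x * y)))
          = q1 * (q2 * (M - φ ((β * x) * y))) := by rw [hxy]; ring
        _ ≤ q1 * (M - φ (β * x)) := mul_le_mul_of_nonneg_left hA hq1.le
        _ ≤ M - φ β := hB
  -- φ is constant equal to M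
  have hconst : ∀ β' : Γ, φ β' = M := by
    intro β'
    refine le_antisymm (hφleM β') ?_
    refine le_of_forall_pos_le_add ?_
    intro ε hε
    -- uniform continuity of f
    obtain ⟨δ₁, hδ₁, hδ₁'⟩ := Metric.uniformContinuous_iff.1
      (CompactSpace.uniformContinuous_of_continuous f.continuous) (ε / 2) (by positivity)
    -- near maximizers
    have hnm : ∀ n : ℕ, ∃ β : Γ, M - 1 / (n + 1) < φ β := by
      intro n
      have hlt : M - 1 / (n + 1) < M := by
        have : (0 : ℝ) < 1 / (n + 1) := by positivity
        linarith
      have hlt' : M - 1 / (n + 1) < sSup (Set.range φ) := by rw [← hMdef]; exact hlt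
      have hne : (Set.range φ).Nonempty := ⟨φ 1, 1, rfl⟩
      obtain ⟨_, ⟨β, rfl⟩, hb⟩ := exists_lt_of_lt_csSup hne hlt'
      exact ⟨β, hb⟩
    choose b hb using hnm
    -- compactness
    have htb : TotallyBounded (Set.range T) := harmonic_tb_aux hcont hequi
    have hK : IsCompact (closure (Set.range T)) :=
      TotallyBounded.isCompact_of_isClosed htb.closure isClosed_closure
    obtain ⟨L, _, σ, hσmono, hσtend⟩ := hK.tendsto_subseq
      (x := fun n => T (b n)) (fun n => subset_closure (Set.mem_range_self _))
    obtain ⟨N, hN⟩ := (Metric.tendsto_atTop.1 hσtend) (δ₁ / 2) (by positivity)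
    set a : Γ := b (σ N) with hadef
    set w : Γ := a⁻¹ * β' with hwdef
    obtain ⟨q, hq, hqw⟩ := hstep w
    -- choose k large
    obtain ⟨m, hm⟩ := exists_nat_one_div_lt (show (0 : ℝ) < q * (ε / 2) by positivity)
    set k : ℕ := max N m with hkdef
    set bk : Γ := b (σ k) with hbkdef
    -- estimate 1 : φ (bk * w) is close to M
    have hσk : (m : ℝ) + 1 ≤ (σ k : ℝ) + 1 := by
      have h1 : m ≤ k := le_max_right N m
      have h2 : k ≤ σ k := hσmono.le_apply
      have : (m : ℕ) ≤ σ k := le_trans h1 h2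
      exact_mod_cast Nat.succ_le_succ this
    have hsmall : 1 / ((σ k : ℝ) + 1) < q * (ε / 2) := by
      have hpos : (0 : ℝ) < (m : ℝ) + 1 := by positivity
      calc 1 / ((σ k : ℝ) + 1) ≤ 1 / ((m : ℝ) + 1) := by
            apply one_div_le_one_div_of_le hpos hσk
        _ < q * (ε / 2) := hm
    have hest1 : M - φ (bk * w) < ε / 2 := by
      have h1 : q * (M - φ (bk * w)) ≤ M - φ bk := hqw bk
      have h2 : M - φ bk < 1 / ((σ k : ℝ) + 1) := by
        have := hb (σ k)
        push_cast
        linarith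
      have h3 : q * (M - φ (bk * w)) < q * (ε / 2) := by
        calc q * (M - φ (bk * w)) ≤ M - φ bk := h1
          _ < 1 / ((σ k : ℝ) + 1) := h2
          _ < q * (ε / 2) := hsmall
      exact lt_of_mul_lt_mul_left h3 hq.le
    -- estimate 2 : φ (bk * w) is close to φ β'
    have hdistab : dist (T bk) (T a) < δ₁ := by
      have h1 : dist (T (b (σ k))) L < δ₁ / 2 := hN k (le_max_left N m)
      have h2 : dist (T (b (σ N))) L < δ₁ / 2 := hN N le_rfl
      calc dist (T bk) (T a) ≤ dist (T bk) L + dist L (T a) := dist_triangle _ _ _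
        _ < δ₁ / 2 + δ₁ / 2 := by
            rw [dist_comm L (T a)]
            exact add_lt_add h1 h2
        _ = δ₁ := by ring
    have haw : a * w = β' := by rw [hwdef, mul_inv_cancel_left]
    have hest2 : |φ (bk * w) - φ β'| ≤ ε / 2 := by
      have hint1 : Integrable (fun x => f ((bk * w) • x)) μ :=
        (f.continuous.comp (hcont (bk * w))).integrable_of_hasCompactSupport
          (HasCompactSupport.of_compactSpace _)
      have hint2 : Integrable (fun x => f (β' • x)) μ :=
        (f.continuous.comp (hcont β')).integrable_of_hasCompactSupport
          (HasCompactSupport.of_compactSpace _)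
      have hpt : ∀ x : X, ‖f ((bk * w) • x) - f (β' • x)‖ ≤ ε / 2 := by
        intro x
        have h1 : (bk * w) • x = bk • (w • x) := mul_smul _ _ _
        have h2 : β' • x = a • (w • x) := by rw [← haw, mul_smul]
        have hd : dist (bk • (w • x)) (a • (w • x)) < δ₁ := by
          have := ContinuousMap.dist_apply_le_dist (f := T bk) (g := T a) (w • x)
          exact lt_of_le_of_lt this hdistab
        have := hδ₁' hd
        rw [h1, h2, Real.norm_eq_abs, ← Real.dist_eq]
        exact this.le
      have : ‖∫ x, (f ((bk * w) • x) - f (β' • x)) ∂μ‖ ≤ (ε / 2) * (μ Set.univ).toReal :=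
        norm_integral_le_of_norm_le_const (Filter.Eventually.of_forall hpt)
      rw [integral_sub hint1 hint2] at this
      simpa [hφdef, Real.norm_eq_abs, measure_univ] using this
    have h5 : M - ε / 2 < φ (bk * w) := by linarith
    have h6 : φ (bk * w) ≤ φ β' + ε / 2 := by
      have := (abs_le.1 hest2).2
      linarith
    linarith
  have h1 : φ 1 = ∫ x, f x ∂μ := by simp [hφdef]
  calc ∫ x, f (γ₀ • x) ∂μ = φ γ₀ := rfl
    _ = M := hconst γ₀
    _ = φ 1 := (hconst 1).symm
    _ = ∫ x, f x ∂μ := h1
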